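/- Let Γ_1 = Γ_2 = 1, Γ_3 = −1/2, and for θ ∈ [0, π/2] define k_1 = (1 + √3 e^{−iθ})/4, k_2 = (1 − √3 e^{−iθ})/4, k_3 = 1. Then k_1, k_2, k_3 are pairwise distinct and nonzero, and for every m ∈ {1, 2, 3}, (i/(2π k_m)) ∑_{n≠m} Γ_n / (conj(k_m) − conj(k_n)) = A(θ) + iB(θ), where A(θ) = −2 sin 2θ / (π(5 − 3 cos 2θ)) and B(θ) = 2(3 − cos 2θ) / (π(5 − 3 cos 2θ)). In particular, the configuration is self-similar collapsing for 0 < θ < π/2 and is a relative equilibrium for θ = 0 and θ = π/2. -/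

import Mathlib

open Finset ComplexConjugate

set_option maxHeartbeats 1600000 in
/-- For the three-vortex family `k₁ = (1 + √3 e^{-iθ})/4`, `k₂ = (1 - √3 e^{-iθ})/4`,
`k₃ = 1` with strengths `(1, 1, -1/2)` and `θ ∈ [0, π/2]`: the points are pairwise
distinct and nonzero, the configuration is self-similar with constant
`A(θ) + iB(θ)` where `A(θ) = -2 sin 2θ/(π(5 - 3cos 2θ))` and
`B(θ) = 2(3 - cos 2θ)/(π(5 - 3cos 2θ))`; in particular it is collapsing (`A < 0`) for
`0 < θ < π/2` and a relative equilibrium (`A = 0`) for `θ = 0` or `θ = π/2`. -/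
theorem three_vortex_explicit_family (θ : ℝ) (hθ0 : 0 ≤ θ) (hθ1 : θ ≤ Real.pi / 2)
    (Γ : Fin 3 → ℝ) (hΓ : Γ = ![1, 1, -(1 / 2)])
    (k : Fin 3 → ℂ)
    (hk : k = ![(1 + ((Real.sqrt 3 : ℝ) : ℂ) * Complex.exp (-(θ : ℂ) * Complex.I)) / 4,
                (1 - ((Real.sqrt 3 : ℝ) : ℂ) * Complex.exp (-(θ : ℂ) * Complex.I)) / 4,
                1]) :
    (∀ m n : Fin 3, m ≠ n → k m ≠ k n)
    ∧ (∀ m, k m ≠ 0)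
    ∧ (∀ m : Fin 3,
        Complex.I / (2 * (Real.pi : ℂ) * k m) *
            ∑ n ∈ Finset.univ.erase m, (Γ n : ℂ) / (conj (k m) - conj (k n))
          = ((-2 * Real.sin (2 * θ) / (Real.pi * (5 - 3 * Real.cos (2 * θ))) : ℝ) : ℂ)
            + ((2 * (3 - Real.cos (2 * θ)) / (Real.pi * (5 - 3 * Real.cos (2 * θ))) : ℝ) : ℂ)
              * Complex.I)
    ∧ (0 < θ → θ < Real.pi / 2 →
        -2 * Real.sin (2 * θ) / (Real.pi * (5 - 3 * Real.cos (2 * θ))) < 0)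
    ∧ ((θ = 0 ∨ θ = Real.pi / 2) →
        -2 * Real.sin (2 * θ) / (Real.pi * (5 - 3 * Real.cos (2 * θ))) = 0) := by
  have hs3 : ((Real.sqrt 3 : ℝ) : ℂ) ^ 2 = 3 := by
    norm_cast; rw [Real.sq_sqrt]; norm_num
  set E := Complex.exp (-(θ:ℂ) * Complex.I) with hEdef
  have hEne : E ≠ 0 := Complex.exp_ne_zero _
  have hconjE : conj E = E⁻¹ := by
    rw [hEdef, ← Complex.exp_conj, ← Complex.exp_neg]
    congr 1; simp [map_mul, Complex.conj_I]
  have hE2 : E ^ 2 = Complex.cos (2*(θ:ℂ)) - Complex.sin (2*(θ:ℂ)) * Complex.I := by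
    have h := Complex.exp_mul_I (-(2*(θ:ℂ)))
    rw [Complex.cos_neg, Complex.sin_neg] at h
    rw [hEdef, sq, ← Complex.exp_add,
      show (-(θ:ℂ)*Complex.I) + (-(θ:ℂ)*Complex.I) = -(2*(θ:ℂ))*Complex.I from by ring, h]
    ring
  have hc2 : (Real.cos (2*θ) : ℂ) = Complex.cos (2*(θ:ℂ)) := by
    rw [Complex.ofReal_cos]; norm_num
  have hs2 : (Real.sin (2*θ) : ℂ) = Complex.sin (2*(θ:ℂ)) := by
    rw [Complex.ofReal_sin]; norm_num
  obtain ⟨u, hudef⟩ : ∃ u : ℂ, u = ((Real.sqrt 3 : ℝ) : ℂ) * E := ⟨_, rfl⟩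
  rw [← hudef] at hk
  have habs : ‖u‖ = Real.sqrt 3 := by
    rw [hudef, norm_mul, Complex.norm_real, Complex.norm_exp]
    simp [Real.sqrt_nonneg, abs_of_nonneg]
  have hsq : Real.sqrt 3 ^ 2 = 3 := Real.sq_sqrt (by norm_num)
  have huc : ∀ c : ℝ, c ^ 2 ≠ 3 → u ≠ (c:ℂ) := by
    intro c hc h
    rw [h, Complex.norm_real, Real.norm_eq_abs] at habs
    exact hc (by rw [← sq_abs, habs, hsq])
  have hu0 : u ≠ 0 := by simpa using huc 0 (by norm_num)
  have hu1 : u ≠ 1 := by simpa using huc 1 (by norm_num)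
  have hum1 : u ≠ -1 := by simpa using huc (-1) (by norm_num)
  have hu3 : u ≠ 3 := by simpa using huc 3 (by norm_num)
  have hum3 : u ≠ -3 := by simpa using huc (-3) (by norm_num)
  have hcu : conj u = 3 / u := by
    rw [hudef, map_mul, hconjE, Complex.conj_ofReal]
    field_simp
    linear_combination hs3
  have hcuu : conj u * u = 3 := by rw [hcu]; field_simp
  have hU2 : u ^ 2 = 3 * ((Real.cos (2*θ) : ℂ) - (Real.sin (2*θ):ℂ) * Complex.I) := by
    rw [hudef, mul_pow, hs3, hE2, hc2, hs2]
  have hU2c : (conj u) ^ 2 = 3 * ((Real.cos (2*θ) : ℂ) + (Real.sin (2*θ):ℂ) * Complex.I) := by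
    have h := congrArg conj hU2
    rw [map_pow] at h
    rw [h, map_mul, map_sub, map_mul, Complex.conj_I, Complex.conj_ofReal,
      Complex.conj_ofReal, map_ofNat]
    ring
  have h6u : (6:ℂ) * u ^ 2 ≠ 0 := mul_ne_zero (by norm_num) (pow_ne_zero 2 hu0)
  have hcos : ((Real.cos (2*θ)) : ℂ) = (u^4 + 9) / (6 * u^2) := by
    rw [eq_div_iff h6u]
    linear_combination (-(u^2)) * hU2 - u^2 * hU2c + (conj u * u + 3) * hcuu
  have hsin : ((Real.sin (2*θ)) : ℂ) = Complex.I * (u^4 - 9) / (6 * u^2) := by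
    rw [eq_div_iff h6u]
    linear_combination (-Complex.I*u^2) * hU2 + (Complex.I*u^2) * hU2c
      - Complex.I*(conj u * u + 3) * hcuu + 6*(Real.sin (2*θ):ℂ)*u^2*Complex.I_sq
  have h1p : (1:ℂ) + u ≠ 0 := fun h => hum1 (by linear_combination h)
  have h1m : (1:ℂ) - u ≠ 0 := fun h => hu1 (by linear_combination -h)
  have h3p : u + 3 ≠ 0 := fun h => hum3 (by linear_combination h)
  have h3m : u - 3 ≠ 0 := fun h => hu3 (by linear_combination h)
  have hπ : ((Real.pi : ℝ) : ℂ) ≠ 0 := Complex.ofReal_ne_zero.mpr Real.pi_ne_zero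
  have hck0 : conj ((1 + u)/4) = (u+3)/(4*u) := by
    rw [map_div₀, map_add, map_one, hcu, map_ofNat]
    field_simp
  have hck1 : conj ((1 - u)/4) = (u-3)/(4*u) := by
    rw [map_div₀, map_sub, map_one, hcu, map_ofNat]
    field_simp
  have hne01 : ((1+u)/4 : ℂ) ≠ (1-u)/4 := fun h => hu0 (by linear_combination 2*h)
  have hne02 : ((1+u)/4 : ℂ) ≠ 1 := fun h => hu3 (by linear_combination 4*h)
  have hne12 : ((1-u)/4 : ℂ) ≠ 1 := fun h => hum3 (by linear_combination -4*h)
  subst hk hΓ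
  refine ⟨?_, ?_, ?_, ?_, ?_⟩
  · intro m n hmn
    fin_cases m <;> fin_cases n <;>
      simp only [Matrix.cons_val_zero, Matrix.cons_val_one, Matrix.head_cons,
        Matrix.cons_val_two, Matrix.tail_cons, Fin.mk_zero, Fin.mk_one, ne_eq] <;>
      first
        | exact absurd rfl hmn
        | exact hne01
        | exact fun h => hne01 h.symm
        | exact hne02
        | exact fun h => hne02 h.symm
        | exact hne12
        | exact fun h => hne12 h.symm
  · intro m
    fin_cases m <;>
      simp only [Matrix.cons_val_zero, Matrix.cons_val_one, Matrix.head_cons,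
        Matrix.cons_val_two, Matrix.tail_cons, ne_eq]
    · exact div_ne_zero h1p (by norm_num)
    · exact div_ne_zero h1m (by norm_num)
    · exact one_ne_zero
  · have e1 : (u^2 - 1 : ℂ) ≠ 0 := by
      intro h
      rcases mul_eq_zero.mp (show (u-1)*(u+1) = 0 from by linear_combination h) with h' | h'
      · exact hu1 (by linear_combination h')
      · exact hum1 (by linear_combination h')
    have e9 : ((9:ℂ) - u^2) ≠ 0 := by
      intro h
      rcases mul_eq_zero.mp (show (3-u)*(3+u) = 0 from by linear_combination h) with h' | h'
      · exact hu3 (by linear_combination -h')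
      · exact hum3 (by linear_combination h')
    have hRHS : ((-2 * Real.sin (2 * θ) / (Real.pi * (5 - 3 * Real.cos (2 * θ))) : ℝ) : ℂ)
            + ((2 * (3 - Real.cos (2 * θ)) / (Real.pi * (5 - 3 * Real.cos (2 * θ))) : ℝ) : ℂ)
              * Complex.I
        = 4 * Complex.I * u^2 / (3 * (Real.pi:ℂ) * (u^2 - 1)) := by
      push_cast
      rw [← hc2, ← hs2, hcos, hsin]
      rw [show ((5:ℂ) - 3 * ((u^4 + 9) / (6 * u^2))) = (u^2-1) * (9 - u^2) / (2 * u^2) from by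
        field_simp; ring]
      have hq : ((Real.pi:ℂ) * ((u^2-1) * (9 - u^2) / (2 * u^2))) ≠ 0 := by
        apply mul_ne_zero hπ
        exact div_ne_zero (mul_ne_zero e1 e9) (mul_ne_zero (by norm_num) (pow_ne_zero 2 hu0))
      rw [div_mul_eq_mul_div, ← add_div, div_eq_div_iff hq
        (mul_ne_zero (mul_ne_zero (by norm_num) hπ) e1)]
      field_simp
      ring
    have h4u : (4:ℂ) * u ≠ 0 := mul_ne_zero (by norm_num) hu0
    intro m
    rw [Finset.sum_erase_eq_sub (Finset.mem_univ m), Fin.sum_univ_three, sub_self,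
      div_zero, sub_zero]
    fin_cases m <;>
      simp only [Fin.isValue, Fin.mk_zero, Fin.mk_one, Matrix.cons_val_zero,
        Matrix.cons_val_one, Matrix.head_cons, Matrix.cons_val_two, Matrix.tail_cons, map_one] <;>
      rw [hck0, hck1] <;>
      refine Eq.trans ?_ hRHS.symm <;>
      push_cast
    · -- m = 0
      have d1 : (u + 3) / (4 * u) - (u - 3) / (4 * u) = 3 / (2 * u) := by
        rw [div_sub_div_same, div_eq_div_iff h4u (mul_ne_zero (by norm_num) hu0)]; ring
      have d2 : (u + 3) / (4 * u) - 1 = (3 - 3 * u) / (4 * u) := by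
        rw [eq_div_iff h4u, sub_mul, div_mul_cancel₀ _ h4u]; ring
      have h33 : (3:ℂ) - 3 * u ≠ 0 := fun h => hu1 (by linear_combination -h/3)
      rw [sub_self, div_zero, d1, d2, one_div_div, div_div_eq_mul_div]
      field_simp
      ring
    · -- m = 1
      have d1 : (u - 3) / (4 * u) - (u + 3) / (4 * u) = -3 / (2 * u) := by
        rw [div_sub_div_same, div_eq_div_iff h4u (mul_ne_zero (by norm_num) hu0)]; ring
      have d2 : (u - 3) / (4 * u) - 1 = (-3 - 3 * u) / (4 * u) := by
        rw [eq_div_iff h4u, sub_mul, div_mul_cancel₀ _ h4u]; ring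
      have h33 : (-3:ℂ) - 3 * u ≠ 0 := fun h => hum1 (by linear_combination -h/3)
      rw [sub_self, div_zero, d1, d2, one_div_div, div_div_eq_mul_div]
      field_simp
      ring
    · -- m = 2
      rw [map_one]
      have d1 : 1 - (u + 3) / (4 * u) = (3 * u - 3) / (4 * u) := by
        rw [eq_div_iff h4u, sub_mul, div_mul_cancel₀ _ h4u]; ring
      have d2 : 1 - (u - 3) / (4 * u) = (3 * u + 3) / (4 * u) := by
        rw [eq_div_iff h4u, sub_mul, div_mul_cancel₀ _ h4u]; ring
      have h33 : (3:ℂ) * u - 3 ≠ 0 := fun h => hu1 (by linear_combination h/3)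
      have h33' : (3:ℂ) * u + 3 ≠ 0 := fun h => hum1 (by linear_combination h/3)
      rw [sub_self, div_zero, d1, d2, one_div_div, one_div_div]
      have h3 : u + 1 ≠ 0 := by rwa [add_comm]
      have h3' : u - 1 ≠ 0 := sub_ne_zero.mpr hu1
      field_simp
      ring
  · intro h0 h1
    have hsinpos : 0 < Real.sin (2*θ) :=
      Real.sin_pos_of_pos_of_lt_pi (by linarith) (by linarith)
    have hD : 0 < Real.pi * (5 - 3 * Real.cos (2*θ)) := by
      have := Real.cos_le_one (2*θ)
      have := Real.pi_pos
      nlinarith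
    apply div_neg_of_neg_of_pos (by linarith) hD
  · rintro (rfl | rfl)
    · simp
    · rw [show 2 * (Real.pi / 2) = Real.pi from by ring, Real.sin_pi]
      simp
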